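/- Fix sets X, Y and a partial function a : Y ⇀ X, and let f : X ⇀ Y. Then there exists h : X ⇀ Y with f = h⬝a⬝f (equivalently, a⬝f is L-related to f in the sandwich semigroup sense, f ∈ P₂ᵃ) if and only if ran(a) saturates ker(f), i.e., for every x ∈ dom(f) there exists y ∈ ran(a) with y ∈ dom(f) and f(y) = f(x). Moreover these conditions are equivalent to: ran(a⬝f) = ran(f). -/

import Mathlib

theorem mem_comp_aux {α β γ : Type*} (f : β →. γ) (g : α →. β) (x : α) (v : γ) :
    v ∈ f.comp g x ↔ ∃ y ∈ g x, v ∈ f y := by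
  simp [PFun.comp_apply, Part.mem_bind_iff]
  exact Part.mem_bind_iff

/-- Fix `a : Y ⇀ X` and `f : X ⇀ Y`.  Then `f ∈ P₂ᵃ`, i.e. there exists
`h : X ⇀ Y` with `f = h⬝a⬝f`, iff `ran a` saturates `ker f` (every kernel class of `f` contains a
point of `ran a`); and these conditions are in turn equivalent to `ran (a⬝f) = ran f`. -/
theorem P2a_iff_PT {X Y : Type*} (a : Y →. X) (f : X →. Y) :
    ((∃ h : X →. Y, f = f.comp (a.comp h)) ↔
        (∀ x ∈ f.Dom, ∃ y ∈ a.ran, y ∈ f.Dom ∧ f y = f x)) ∧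
    ((∀ x ∈ f.Dom, ∃ y ∈ a.ran, y ∈ f.Dom ∧ f y = f x) ↔
        (f.comp a).ran = f.ran) := by
  classical
  constructor
  · constructor
    · rintro ⟨h, hf⟩ x hx
      obtain ⟨v, hv⟩ := (PFun.mem_dom f x).1 hx
      have hv' : v ∈ (f.comp (a.comp h)) x := by rw [← hf]; exact hv
      rw [mem_comp_aux] at hv'
      obtain ⟨y, hy, hvy⟩ := hv'
      rw [mem_comp_aux] at hy
      obtain ⟨z, hz, hyz⟩ := hy
      refine ⟨y, ⟨z, hyz⟩, (PFun.mem_dom f y).2 ⟨v, hvy⟩, ?_⟩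
      rw [Part.eq_some_iff.2 hvy, Part.eq_some_iff.2 hv]
    · intro H
      choose y hyran hyDom hyeq using H
      choose z hz using fun x hx => hyran x hx
      refine ⟨fun x => Part.assert (x ∈ f.Dom) fun hx => Part.some (z x hx), ?_⟩
      funext x
      by_cases hx : x ∈ f.Dom
      · have key : y x hx ∈ (a.comp fun x =>
            Part.assert (x ∈ f.Dom) fun hx => Part.some (z x hx)) x := by
          refine (mem_comp_aux _ _ _ _).2 ?_
          exact ⟨z x hx, Part.mem_assert_iff.2 ⟨hx, Part.mem_some _⟩, hz x hx⟩
        have hfy : ((f x).get hx) ∈ f (y x hx) := by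
          rw [hyeq x hx]; exact Part.get_mem hx
        apply Part.ext'
        · constructor
          · intro _
            exact Part.dom_iff_mem.2
              ⟨(f x).get hx, (mem_comp_aux ..).2 ⟨y x hx, key, hfy⟩⟩
          · intro _; exact hx
        · intro h1 h2
          have hm : ((f.comp (a.comp fun x =>
              Part.assert (x ∈ f.Dom) fun hx => Part.some (z x hx))) x).get h2 ∈
              (f.comp (a.comp fun x =>
              Part.assert (x ∈ f.Dom) fun hx => Part.some (z x hx))) x := Part.get_mem h2
          rw [mem_comp_aux] at hm
          obtain ⟨y', hy', hvy'⟩ := hm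
          replace hy' := (mem_comp_aux _ _ _ _).1 hy'
          obtain ⟨z', hz', hy'z⟩ := hy'
          simp only [Part.mem_assert_iff, Part.mem_some_iff] at hz'
          obtain ⟨hx', rfl⟩ := hz'
          have hyy : y' = y x hx := Part.mem_unique hy'z (hz x hx)
          subst hyy
          have heq := hyeq x hx
          exact Part.get_eq_of_mem (heq ▸ hvy') h1
      · have h1 : f x = Part.none := Part.eq_none_iff'.2 hx
        have h2 : (f.comp (a.comp fun x =>
            Part.assert (x ∈ f.Dom) fun hx => Part.some (z x hx))) x = Part.none := by
          apply Part.eq_none_iff.2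
          intro v hv
          rw [mem_comp_aux] at hv
          obtain ⟨y', hy', -⟩ := hv
          replace hy' := (mem_comp_aux _ _ _ _).1 hy'
          obtain ⟨z', hz', -⟩ := hy'
          exact hx ((Part.mem_assert_iff.1 hz').1)
        rw [h1, h2]
  · constructor
    · intro H
      apply Set.Subset.antisymm
      · rintro v ⟨w, hv⟩
        rw [mem_comp_aux] at hv
        obtain ⟨x, -, hvx⟩ := hv
        exact ⟨x, hvx⟩
      · rintro v ⟨x, hv⟩
        have hx : x ∈ f.Dom := (PFun.mem_dom f x).2 ⟨v, hv⟩
        obtain ⟨yy, ⟨w, hw⟩, hyDom, hyeq⟩ := H x hx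
        exact ⟨w, (mem_comp_aux ..).2 ⟨yy, hw, hyeq ▸ hv⟩⟩
    · intro H x hx
      have hv : (f x).get hx ∈ f.ran := ⟨x, Part.get_mem hx⟩
      rw [← H] at hv
      obtain ⟨w, hv⟩ := hv
      rw [mem_comp_aux] at hv
      obtain ⟨yy, hy, hvy⟩ := hv
      refine ⟨yy, ⟨w, hy⟩, (PFun.mem_dom f yy).2 ⟨_, hvy⟩, ?_⟩
      exact (Part.eq_some_iff.2 hvy).trans (Part.eq_some_iff.2 (Part.get_mem hx)).symm
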